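/- Let n ≥ 1 and let Λ ⊆ ℤ^n be a subgroup of finite index D = #(ℤ^n/Λ). Then there exists a ℤ-basis v₁, …, v_n of Λ such that every entry of every v_i has absolute value at most D. -/

import Mathlib

section Aux

variable {n : ℕ}

/-- Vectors supported on coordinates `< m`. -/
def Tcut (n m : ℕ) : Submodule ℤ (Fin n → ℤ) where
  carrier := {x | ∀ j : Fin n, m ≤ (j : ℕ) → x j = 0}
  add_mem' := by
    intro a b ha hb j hj
    simp [Pi.add_apply, ha j hj, hb j hj]
  zero_mem' := by intro j hj; rfl
  smul_mem' := by
    intro c x hx j hj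
    simp [Pi.smul_apply, hx j hj]

lemma mem_Tcut {n m : ℕ} {x : Fin n → ℤ} :
    x ∈ Tcut n m ↔ ∀ j : Fin n, m ≤ (j : ℕ) → x j = 0 := Iff.rfl

/-- Reduction of a vector modulo the vectors `w 0, …, w (m-1)`. -/
def red (d : Fin n → ℤ) (w : Fin n → Fin n → ℤ) : ℕ → (Fin n → ℤ) → (Fin n → ℤ)
  | 0, x => x
  | m + 1, x =>
    if h : m < n then red d w m (x - (x ⟨m, h⟩ / d ⟨m, h⟩) • w ⟨m, h⟩) else x

lemma red_sub_mem (d : Fin n → ℤ) (w : Fin n → Fin n → ℤ) (m : ℕ) (x : Fin n → ℤ) :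
    red d w m x - x ∈ Submodule.span ℤ (w '' {k : Fin n | (k : ℕ) < m}) := by
  induction m generalizing x with
  | zero => simp [red]
  | succ m ih =>
    have hmono : Submodule.span ℤ (w '' {k : Fin n | (k : ℕ) < m}) ≤
        Submodule.span ℤ (w '' {k : Fin n | (k : ℕ) < m + 1}) :=
      Submodule.span_mono (Set.image_mono (fun k hk => Nat.lt_succ_of_lt hk))
    rw [red]
    by_cases h : m < n
    · simp only [h, dif_pos]
      set y := x - (x ⟨m, h⟩ / d ⟨m, h⟩) • w ⟨m, h⟩ with hy
      have h1 : red d w m y - y ∈ Submodule.span ℤ (w '' {k : Fin n | (k : ℕ) < m + 1}) :=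
        hmono (ih y)
      have h2 : y - x ∈ Submodule.span ℤ (w '' {k : Fin n | (k : ℕ) < m + 1}) := by
        have : y - x = (-(x ⟨m, h⟩ / d ⟨m, h⟩)) • w ⟨m, h⟩ := by
          rw [hy]; ring_nf
        rw [this]
        exact Submodule.smul_mem _ _ (Submodule.subset_span ⟨⟨m, h⟩, by simp, rfl⟩)
      have := Submodule.add_mem _ h1 h2
      simpa using this
    · simp [h]

lemma red_apply_ge (d : Fin n → ℤ) (w : Fin n → Fin n → ℤ)
    (hw : ∀ k j : Fin n, (k : ℕ) < (j : ℕ) → w k j = 0)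
    (m : ℕ) (x : Fin n → ℤ) (j : Fin n) (hj : m ≤ (j : ℕ)) :
    red d w m x j = x j := by
  induction m generalizing x with
  | zero => rfl
  | succ m ih =>
    rw [red]
    by_cases h : m < n
    · simp only [h, dif_pos]
      rw [ih _ (Nat.le_of_succ_le hj)]
      have : w ⟨m, h⟩ j = 0 := hw _ _ (by simpa using Nat.lt_of_succ_le hj)
      simp [this]
    · simp [h]

lemma red_apply_lt (d : Fin n → ℤ) (w : Fin n → Fin n → ℤ)
    (hw : ∀ k j : Fin n, (k : ℕ) < (j : ℕ) → w k j = 0)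
    (hdiag : ∀ k : Fin n, w k k = d k)
    (hd : ∀ k : Fin n, 0 < d k)
    (m : ℕ) (hm : m ≤ n) (x : Fin n → ℤ) (j : Fin n) (hj : (j : ℕ) < m) :
    0 ≤ red d w m x j ∧ red d w m x j < d j := by
  induction m generalizing x with
  | zero => omega
  | succ m ih =>
    have h : m < n := Nat.lt_of_succ_le hm
    rw [red]
    simp only [h, dif_pos]
    set km : Fin n := ⟨m, h⟩ with hkm
    set y := x - (x km / d km) • w km with hy
    rcases Nat.lt_or_ge (j : ℕ) m with hjm | hjm
    · exact ih (Nat.le_of_succ_le hm) y hjm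
    · -- j = km
      have hjk : j = km := by
        apply Fin.ext
        simp only [hkm]
        omega
      rw [red_apply_ge d w hw m y j hjm]
      have hyj : y j = x j % d j := by
        rw [hy, hjk]
        simp only [Pi.sub_apply, Pi.smul_apply, smul_eq_mul, hdiag km]
        rw [Int.emod_def, ← hjk]
        ring
      rw [hyj]
      exact ⟨Int.emod_nonneg _ (ne_of_gt (hd j)), Int.emod_lt_of_pos _ (hd j)⟩

end Aux

/-- Let `n ≥ 1` and let `Λ ⊆ ℤ^n` be a subgroup of finite index `D = #(ℤ^n/Λ)`. Then there
exists a `ℤ`-basis `v₁, …, v_n` of `Λ` such that every entry of every `v_i` has absolute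
value at most `D`. -/
theorem basis_with_small_entries (n : ℕ) (hn : 1 ≤ n) (Λ : Submodule ℤ (Fin n → ℤ))
    (D : ℕ) (hD : D = Nat.card ((Fin n → ℤ) ⧸ Λ)) (hfin : D ≠ 0) :
    ∃ v : Module.Basis (Fin n) ℤ Λ, ∀ i j : Fin n, |((v i : Fin n → ℤ) j)| ≤ (D : ℤ) := by
  classical
  -- D • x ∈ Λ for every x
  have hDsmul : ∀ x : Fin n → ℤ, (D : ℤ) • x ∈ Λ := by
    intro x
    have h0 : (D : ℕ) • (Submodule.Quotient.mk x : (Fin n → ℤ) ⧸ Λ) = 0 := by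
      rw [hD]; exact card_nsmul_eq_zero'
    have : Submodule.Quotient.mk ((D : ℤ) • x) = (0 : (Fin n → ℤ) ⧸ Λ) := by
      rw [Submodule.Quotient.mk_smul]
      rw [← h0]
      push_cast
      simp
    exact (Submodule.Quotient.mk_eq_zero Λ).mp this
  -- the ideals
  set S : Fin n → Submodule ℤ (Fin n → ℤ) := fun k => Λ ⊓ Tcut n ((k : ℕ) + 1) with hS
  set J : Fin n → Ideal ℤ := fun k => Submodule.map (LinearMap.proj k) (S k) with hJ
  set d : Fin n → ℤ := fun k => ((Submodule.IsPrincipal.generator (J k)).natAbs : ℤ) with hd'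
  have hdvd_iff : ∀ (k : Fin n) (x : ℤ), x ∈ J k ↔ d k ∣ x := by
    intro k x
    rw [Submodule.IsPrincipal.mem_iff_generator_dvd, hd']
    exact ⟨fun h => (Int.natAbs_dvd).mpr h, fun h => (Int.natAbs_dvd).mp h⟩
  have hdmem : ∀ k : Fin n, d k ∈ J k := by
    intro k
    rw [Submodule.IsPrincipal.mem_iff_generator_dvd]
    exact Int.dvd_natAbs.mpr dvd_rfl
  -- D ∈ J k
  have hDmem : ∀ k : Fin n, (D : ℤ) ∈ J k := by
    intro k
    refine ⟨(D : ℤ) • Pi.single k (1 : ℤ), ⟨hDsmul _, ?_⟩, ?_⟩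
    · intro j hj
      have hjk : j ≠ k := by
        intro h; subst h; omega
      simp [Pi.single_apply, hjk]
    · simp [Pi.single_apply]
  have hd_dvd_D : ∀ k : Fin n, d k ∣ (D : ℤ) := fun k => (hdvd_iff k _).mp (hDmem k)
  have hd_pos : ∀ k : Fin n, 0 < d k := by
    intro k
    rcases (hd' ▸ rfl : d k = ((Submodule.IsPrincipal.generator (J k)).natAbs : ℤ)) with h
    have h0 : d k ≠ 0 := by
      intro h0
      have := hd_dvd_D k
      rw [h0] at this
      exact hfin (by exact_mod_cast zero_dvd_iff.mp this)
    have : 0 ≤ d k := by rw [hd']; positivity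
    omega
  have hd_le_D : ∀ k : Fin n, d k ≤ (D : ℤ) := fun k =>
    Int.le_of_dvd (by exact_mod_cast Nat.pos_of_ne_zero hfin) (hd_dvd_D k)
  -- choose w
  have hw_exists : ∀ k : Fin n, ∃ x, x ∈ S k ∧ x k = d k := by
    intro k
    obtain ⟨x, hx, hxk⟩ := hdmem k
    exact ⟨x, hx, hxk⟩
  choose w hwS hwdiag using hw_exists
  have hwΛ : ∀ k, w k ∈ Λ := fun k => (hwS k).1
  have hw_supp : ∀ k j : Fin n, (k : ℕ) < (j : ℕ) → w k j = 0 := by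
    intro k j hkj
    exact (hwS k).2 j hkj
  -- the reduced vectors
  set v : Fin n → (Fin n → ℤ) := fun k => red d w (k : ℕ) (w k) with hv
  -- coordinates of v
  have hv_ge : ∀ k j : Fin n, (k : ℕ) ≤ (j : ℕ) → v k j = w k j := by
    intro k j hkj
    exact red_apply_ge d w hw_supp _ _ _ hkj
  have hv_diag : ∀ k : Fin n, v k k = d k := fun k => by
    rw [hv_ge k k le_rfl]; exact hwdiag k
  have hv_supp : ∀ k j : Fin n, (k : ℕ) < (j : ℕ) → v k j = 0 := by
    intro k j hkj
    rw [hv_ge k j (le_of_lt hkj)]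
    exact hw_supp k j hkj
  have hv_lt : ∀ k j : Fin n, (j : ℕ) < (k : ℕ) → 0 ≤ v k j ∧ v k j < d j := by
    intro k j hjk
    exact red_apply_lt d w hw_supp hwdiag hd_pos _ (le_of_lt k.isLt) _ _ hjk
  -- span of the w's below m contains Λ ∩ Tcut m
  have hspanW : ∀ m : ℕ, m ≤ n → ∀ x, x ∈ Λ → x ∈ Tcut n m →
      x ∈ Submodule.span ℤ (w '' {k : Fin n | (k : ℕ) < m}) := by
    intro m
    induction m with
    | zero =>
      intro _ x hxΛ hxT
      have : x = 0 := funext fun j => hxT j (Nat.zero_le _)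
      simp [this]
    | succ m ih =>
      intro hm x hxΛ hxT
      have h : m < n := Nat.lt_of_succ_le hm
      set km : Fin n := ⟨m, h⟩ with hkm
      have hxJ : x km ∈ J km := ⟨x, ⟨hxΛ, by simpa [hkm] using hxT⟩, rfl⟩
      obtain ⟨c, hc⟩ := (hdvd_iff km _).mp hxJ
      set y := x - c • w km with hy
      have hyΛ : y ∈ Λ := Submodule.sub_mem _ hxΛ (Submodule.smul_mem _ _ (hwΛ km))
      have hyT : y ∈ Tcut n m := by
        intro j hj
        rcases Nat.lt_or_ge m (j : ℕ) with hlt | hge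
        · have h1 : x j = 0 := hxT j hlt
          have h2 : w km j = 0 := hw_supp km j (by simpa [hkm] using hlt)
          simp [hy, h1, h2]
        · have hjm : (j : ℕ) = m := le_antisymm hge hj
          have hjkm : j = km := Fin.ext (by simp [hkm, hjm])
          subst hjkm
          simp only [hy, Pi.sub_apply, Pi.smul_apply, smul_eq_mul, hwdiag]
          rw [hc]; ring
      have hyspan := ih (Nat.le_of_succ_le hm) y hyΛ hyT
      have hmono : Submodule.span ℤ (w '' {k : Fin n | (k : ℕ) < m}) ≤
          Submodule.span ℤ (w '' {k : Fin n | (k : ℕ) < m + 1}) :=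
        Submodule.span_mono (Set.image_mono (fun k hk => Nat.lt_succ_of_lt hk))
      have hwmem : w km ∈ Submodule.span ℤ (w '' {k : Fin n | (k : ℕ) < m + 1}) :=
        Submodule.subset_span ⟨km, by simp [hkm], rfl⟩
      have : x = y + c • w km := by rw [hy]; abel
      rw [this]
      exact Submodule.add_mem _ (hmono hyspan) (Submodule.smul_mem _ _ hwmem)
  -- span of v equals Λ
  set V : Submodule ℤ (Fin n → ℤ) := Submodule.span ℤ (Set.range v) with hV
  have hvΛ : ∀ k, v k ∈ Λ := by
    intro k
    have h1 : v k - w k ∈ Submodule.span ℤ (w '' {j : Fin n | (j : ℕ) < (k : ℕ)}) :=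
      red_sub_mem d w _ _
    have h2 : Submodule.span ℤ (w '' {j : Fin n | (j : ℕ) < (k : ℕ)}) ≤ Λ := by
      rw [Submodule.span_le]
      rintro _ ⟨j, _, rfl⟩
      exact hwΛ j
    have := Submodule.add_mem Λ (h2 h1) (hwΛ k)
    simpa using this
  have hVle : V ≤ Λ := by
    rw [hV, Submodule.span_le]
    rintro _ ⟨k, rfl⟩
    exact hvΛ k
  have hwV' : ∀ (m : ℕ) (k : Fin n), (k : ℕ) < m → w k ∈ V := by
    intro m
    induction m with
    | zero => intro k hk; omega
    | succ m ih =>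
      intro k hk
      have h1 : v k - w k ∈ Submodule.span ℤ (w '' {j : Fin n | (j : ℕ) < (k : ℕ)}) :=
        red_sub_mem d w _ _
      have h2 : Submodule.span ℤ (w '' {j : Fin n | (j : ℕ) < (k : ℕ)}) ≤ V := by
        rw [Submodule.span_le]
        rintro _ ⟨j, hj, rfl⟩
        exact ih j (by exact Nat.lt_of_lt_of_le hj (Nat.lt_succ_iff.mp hk))
      have hvk : v k ∈ V := Submodule.subset_span ⟨k, rfl⟩
      have := Submodule.sub_mem V hvk (h2 h1)
      simpa using this
  have hwV : ∀ k : Fin n, w k ∈ V := fun k => hwV' n k k.isLt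
  have hΛle : Λ ≤ V := by
    intro x hx
    have hxT : x ∈ Tcut n n := fun j hj => absurd hj (by exact Nat.not_le.mpr j.isLt)
    have := hspanW n le_rfl x hx hxT
    have hsub : Submodule.span ℤ (w '' {k : Fin n | (k : ℕ) < n}) ≤ V := by
      rw [Submodule.span_le]
      rintro _ ⟨j, _, rfl⟩
      exact hwV j
    exact hsub this
  have hVΛ : V = Λ := le_antisymm hVle hΛle
  -- linear independence
  have hli : LinearIndependent ℤ v := by
    rw [Fintype.linearIndependent_iff]
    intro g hg
    by_contra hcon
    push_neg at hcon
    set s : Finset (Fin n) := Finset.univ.filter (fun i => g i ≠ 0) with hs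
    have hsne : s.Nonempty := by
      obtain ⟨i, hi⟩ := hcon
      exact ⟨i, by simp [hs, hi]⟩
    set i0 := s.max' hsne with hi0
    have hi0mem : g i0 ≠ 0 := by
      have := s.max'_mem hsne
      simpa [hs] using this
    have hgt : ∀ j : Fin n, i0 < j → g j = 0 := by
      intro j hj
      by_contra hgj
      have : j ∈ s := by simp [hs, hgj]
      exact absurd (s.le_max' j this) (not_le.mpr hj)
    have heval := congrFun hg i0
    rw [Finset.sum_apply] at heval
    have hsingle : ∑ i : Fin n, (g i • v i) i0 = g i0 * d i0 := by
      rw [Finset.sum_eq_single i0]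
      · simp [hv_diag i0]
      · intro b _ hb
        rcases lt_or_gt_of_ne hb with hlt | hgt'
        · -- b < i0 : v b i0 = 0
          simp [hv_supp b i0 hlt]
        · -- b > i0 : g b = 0
          simp [hgt b hgt']
      · intro h; exact absurd (Finset.mem_univ i0) h
    rw [hsingle] at heval
    have : g i0 = 0 := by
      rcases mul_eq_zero.mp heval with h | h
      · exact h
      · exact absurd h (ne_of_gt (hd_pos i0))
    exact hi0mem this
  -- assemble the basis
  let b0 : Module.Basis (Fin n) ℤ V := Module.Basis.span hli
  let e : V ≃ₗ[ℤ] Λ := LinearEquiv.ofEq V Λ hVΛ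
  refine ⟨b0.map e, ?_⟩
  intro i j
  have hcoe : ((b0.map e i : Λ) : Fin n → ℤ) = v i := by
    simp only [Module.Basis.map_apply, e, LinearEquiv.coe_ofEq_apply]
    exact congrArg Subtype.val (Module.Basis.span_apply hli i)
  rw [hcoe]
  rcases lt_trichotomy ((i : ℕ)) ((j : ℕ)) with h | h | h
  · rw [hv_supp i j h]
    simp [Nat.pos_of_ne_zero hfin]
  · have : j = i := Fin.ext h.symm
    subst this
    rw [hv_diag]
    rw [abs_of_pos (hd_pos j)]
    exact hd_le_D j
  · obtain ⟨h1, h2⟩ := hv_lt i j h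
    rw [abs_of_nonneg h1]
    exact le_trans (le_of_lt h2) (hd_le_D j)
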